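/- Let v = v₁ + i·v₂ be a C² solution of i·c·v' + v'' + ω·(v/|v|²)(1 − |v|²) = 0 on ℝ with v never zero, and set η = 1 − |v|². If v' and η vanish at +∞, then v₁v₂' − v₁'v₂ = (c/2)·η on all of ℝ. -/

import Mathlib

open Complex Filter

theorem stmt_16 (c ω : ℝ) (v : ℝ → ℂ)
    (hv : ContDiff ℝ 2 v) (hne : ∀ σ, v σ ≠ 0)
    (hODE : ∀ σ : ℝ,
      I * (c : ℂ) * deriv v σ + deriv (deriv v) σ
        + (ω : ℂ) * (v σ / ((‖v σ‖^2 : ℝ) : ℂ)) * (1 - ((‖v σ‖^2 : ℝ) : ℂ)) = 0)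
    (hv' : Tendsto (deriv v) atTop (nhds 0))
    (hη : Tendsto (fun σ => 1 - ‖v σ‖^2) atTop (nhds 0)) :
    ∀ σ : ℝ, (v σ).re * (deriv v σ).im - (deriv v σ).re * (v σ).im
      = (c/2) * (1 - ‖v σ‖^2) := by
  have hd1 : Differentiable ℝ v := hv.differentiable (by norm_num)
  have hd2 : Differentiable ℝ (deriv v) := by
    have h : ContDiff ℝ ((1:ℕ)+1) v := by norm_num at hv ⊢; exact hv
    exact (contDiff_succ_iff_deriv.mp h).2.2.differentiable (by norm_num)
  have hns : ∀ x : ℝ, ‖v x‖^2 = (v x).re^2 + (v x).im^2 := by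
    intro x
    rw [Complex.sq_norm, Complex.normSq_apply]
    ring
  set F : ℝ → ℝ := fun x => (v x).re * (deriv v x).im - (deriv v x).re * (v x).im
      - (c/2) * (1 - ((v x).re^2 + (v x).im^2)) with hF
  have hre : ∀ x, HasDerivAt (fun y => (v y).re) ((deriv v x).re) x := fun x =>
    Complex.reCLM.hasFDerivAt.comp_hasDerivAt x (hd1 x).hasDerivAt
  have him : ∀ x, HasDerivAt (fun y => (v y).im) ((deriv v x).im) x := fun x =>
    Complex.imCLM.hasFDerivAt.comp_hasDerivAt x (hd1 x).hasDerivAt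
  have hre' : ∀ x, HasDerivAt (fun y => (deriv v y).re) ((deriv (deriv v) x).re) x := fun x =>
    Complex.reCLM.hasFDerivAt.comp_hasDerivAt x (hd2 x).hasDerivAt
  have him' : ∀ x, HasDerivAt (fun y => (deriv v y).im) ((deriv (deriv v) x).im) x := fun x =>
    Complex.imCLM.hasFDerivAt.comp_hasDerivAt x (hd2 x).hasDerivAt
  have key : ∀ x, HasDerivAt F 0 x := by
    intro x
    have hvpos : (0:ℝ) < ‖v x‖ := norm_pos_iff.mpr (hne x)
    obtain ⟨n, hndef⟩ : ∃ n : ℝ, n = ‖v x‖^2 := ⟨_, rfl⟩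
    have hn : (0:ℝ) < n := by rw [hndef]; positivity
    have hm : I*(c:ℂ)*deriv v x * (n:ℂ) + deriv (deriv v) x * (n:ℂ)
        + (ω:ℂ)*(v x)*(1-(n:ℂ)) = 0 := by
      have h := hODE x
      rw [← hndef] at h
      have hn0 : (n:ℂ) ≠ 0 := by exact_mod_cast hn.ne'
      field_simp at h
      linear_combination h
    have hr := congrArg Complex.re hm
    have hi := congrArg Complex.im hm
    simp [Complex.add_re, Complex.add_im, Complex.mul_re, Complex.mul_im,
      Complex.sub_re, Complex.sub_im] at hr hi
    have hD : HasDerivAt F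
        (((deriv v x).re * (deriv v x).im + (v x).re * (deriv (deriv v) x).im
          - ((deriv (deriv v) x).re * (v x).im + (deriv v x).re * (deriv v x).im))
          - (c/2) * (0 - (2 * (v x).re * (deriv v x).re + 2 * (v x).im * (deriv v x).im))) x := by
      exact (((hre x).mul (him' x)).sub ((hre' x).mul (him x))).sub
        ((((hasDerivAt_const x (1:ℝ)).sub
          (((hre x).pow 2).add ((him x).pow 2))).const_mul (c/2)).congr_deriv (by ring))
    have hT : (((deriv v x).re * (deriv v x).im + (v x).re * (deriv (deriv v) x).im
          - ((deriv (deriv v) x).re * (v x).im + (deriv v x).re * (deriv v x).im))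
          - (c/2) * (0 - (2 * (v x).re * (deriv v x).re + 2 * (v x).im * (deriv v x).im))) * n
          = 0 := by
      linear_combination (v x).re * hi - (v x).im * hr
    have hz := (mul_eq_zero.mp hT).resolve_right hn.ne'
    rw [hz] at hD
    exact hD
  have hconst : ∀ x y, F x = F y :=
    is_const_of_deriv_eq_zero (fun t => (key t).differentiableAt) (fun t => (key t).deriv)
  have hnsq : Tendsto (fun x => ‖v x‖^2) atTop (nhds 1) := by
    have := tendsto_const_nhds (α := ℝ) (x := (1:ℝ)) (f := atTop) |>.sub hη
    simpa using this
  have hnorm : Tendsto (fun x => ‖v x‖) atTop (nhds 1) := by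
    have h := hnsq.sqrt
    simp only [Real.sqrt_one] at h
    exact h.congr (fun x => Real.sqrt_sq (norm_nonneg _))
  have hprod : Tendsto (fun x => ‖v x‖ * ‖deriv v x‖) atTop (nhds 0) := by
    have := hnorm.mul (hv'.norm)
    simpa using this
  have hcross : Tendsto (fun x => (starRingEnd ℂ) (v x) * deriv v x) atTop (nhds 0) := by
    rw [tendsto_zero_iff_norm_tendsto_zero]
    refine hprod.congr (fun x => ?_)
    rw [norm_mul, RCLike.norm_conj]
  have hcrossim : Tendsto (fun x => ((starRingEnd ℂ) (v x) * deriv v x).im) atTop (nhds 0) := by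
    have := (Complex.continuous_im.tendsto 0).comp hcross
    simpa only [Function.comp_def, Complex.zero_im] using this
  have hFlim : Tendsto F atTop (nhds 0) := by
    have h := hcrossim.sub (hη.const_mul (c/2))
    have h' : Tendsto (fun x => ((starRingEnd ℂ) (v x) * deriv v x).im
        - (c/2)*(1-‖v x‖^2)) atTop (nhds 0) := by simpa using h
    refine h'.congr (fun x => ?_)
    simp only [hF]
    rw [← hns x, Complex.mul_im, Complex.conj_re, Complex.conj_im]
    ring
  have hF0 : F 0 = 0 :=
    tendsto_nhds_unique (tendsto_const_nhds.congr (fun x => hconst 0 x)) hFlim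
  intro σ
  have hσ := (hconst σ 0).trans hF0
  simp only [hF] at hσ
  rw [hns σ]
  linarith [hσ]
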